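/- If two sequences of integers (i_k) and (j_k) satisfy ∏_{k=1}^∞ (1-q^k)^{i_k} = ∏_{k=1}^∞ (1-q^k)^{j_k} in ℤ[[q]], then i_k = j_k for all k. -/

import Mathlib

open PowerSeries Finset

/-- The power series `1 - q^(k+1)`, as a unit of `ℤ⟦X⟧`. -/
noncomputable def oneSubX (k : ℕ) : (PowerSeries ℤ)ˣ :=
  ((PowerSeries.isUnit_iff_constantCoeff (φ := 1 - X ^ (k + 1))).mpr (by simp)).unit

/-- `f = ∏_{k=1}^∞ (1 - q^k)^(i k)` in `ℤ⟦X⟧`, interpreted q-adically: modulo `q^N`, `f`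
agrees with the finite product of the factors `(1 - q^k)^(i k)` for `1 ≤ k ≤ N`. -/
def HasProdExpansion (f : PowerSeries ℤ) (i : ℕ → ℤ) : Prop :=
  ∀ N : ℕ, trunc N f =
    trunc N ((∏ k ∈ range N, oneSubX k ^ i (k + 1) : (PowerSeries ℤ)ˣ) : PowerSeries ℤ)

lemma oneSubX_val (k : ℕ) :
    ((oneSubX k : (PowerSeries ℤ)ˣ) : PowerSeries ℤ) = 1 - X ^ (k + 1) := by
  simp [oneSubX]

lemma trunc_eq_iff {N : ℕ} {f g : PowerSeries ℤ} :
    trunc N f = trunc N g ↔ (X : PowerSeries ℤ) ^ N ∣ (f - g) := by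
  rw [PowerSeries.X_pow_dvd_iff]
  constructor
  · intro hfg m hm
    have := congrArg (fun p => Polynomial.coeff p m) hfg
    simp only [coeff_trunc, if_pos hm] at this
    simp [this]
  · intro hd
    ext m
    rw [coeff_trunc, coeff_trunc]
    split
    · have := hd m ‹_›
      rw [map_sub, sub_eq_zero] at this
      exact this
    · rfl

lemma zpow_one_dvd (N : ℕ) (u : (PowerSeries ℤ)ˣ)
    (hu : (X : PowerSeries ℤ) ^ N ∣ ((u : PowerSeries ℤ) - 1)) (e : ℤ) :
    (X : PowerSeries ℤ) ^ N ∣ ((u ^ e : (PowerSeries ℤ)ˣ) : PowerSeries ℤ) - 1 := by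
  set I := Ideal.span {(X : PowerSeries ℤ) ^ N} with hI
  have key : ∀ v : (PowerSeries ℤ)ˣ,
      ((X : PowerSeries ℤ) ^ N ∣ ((v : PowerSeries ℤ) - 1)) ↔
      Units.map (Ideal.Quotient.mk I : PowerSeries ℤ →* PowerSeries ℤ ⧸ I) v = 1 := by
    intro v
    rw [Units.ext_iff]
    simp only [Units.coe_map, Units.val_one, MonoidHom.coe_coe]
    rw [← sub_eq_zero, ← map_one (Ideal.Quotient.mk I), ← map_sub,
      Ideal.Quotient.eq_zero_iff_mem, hI, Ideal.mem_span_singleton]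
  rw [key]
  rw [map_zpow]
  rw [(key u).mp hu, one_zpow]

lemma pow_oneSubX_dvd (n m : ℕ) :
    (X : PowerSeries ℤ) ^ (n + 2) ∣
      ((oneSubX n ^ m : (PowerSeries ℤ)ˣ) : PowerSeries ℤ)
        - (1 - (m : PowerSeries ℤ) * X ^ (n + 1)) := by
  have hY2 : (X : PowerSeries ℤ) ^ (n + 2) ∣ X ^ (n + 1) * X ^ (n + 1) := by
    rw [← pow_add]
    exact pow_dvd_pow _ (by omega)
  obtain ⟨t, ht⟩ := hY2
  induction m with
  | zero => simp
  | succ m IH =>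
    obtain ⟨s, hs⟩ := IH
    rw [Units.val_pow_eq_pow_val, oneSubX_val] at hs ⊢
    refine ⟨(1 - X ^ (n + 1)) * s + (m : PowerSeries ℤ) * t, ?_⟩
    push_cast
    linear_combination (1 - (X:PowerSeries ℤ) ^ (n + 1)) * hs + (m : PowerSeries ℤ) * ht

lemma zpow_oneSubX_dvd (n : ℕ) (e : ℤ) :
    (X : PowerSeries ℤ) ^ (n + 2) ∣
      ((oneSubX n ^ e : (PowerSeries ℤ)ˣ) : PowerSeries ℤ)
        - (1 - (e : PowerSeries ℤ) * X ^ (n + 1)) := by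
  have hY2 : (X : PowerSeries ℤ) ^ (n + 2) ∣ X ^ (n + 1) * X ^ (n + 1) := by
    rw [← pow_add]; exact pow_dvd_pow _ (by omega)
  obtain ⟨t, ht⟩ := hY2
  cases e with
  | ofNat m =>
    rw [Int.ofNat_eq_coe, zpow_natCast]
    simpa using pow_oneSubX_dvd n m
  | negSucc m =>
    set v : (PowerSeries ℤ)ˣ := oneSubX n ^ (m + 1) with hv
    obtain ⟨s, hs⟩ := pow_oneSubX_dvd n (m + 1)
    rw [← hv] at hs
    push_cast at hs
    have hvv : ((v⁻¹ : (PowerSeries ℤ)ˣ) : PowerSeries ℤ) * (v : PowerSeries ℤ) = 1 :=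
      Units.inv_mul v
    rw [zpow_negSucc, ← hv]
    refine ⟨((v⁻¹ : (PowerSeries ℤ)ˣ) : PowerSeries ℤ) *
      (((m : PowerSeries ℤ) + 1) ^ 2 * t - s * (1 + ((m : PowerSeries ℤ) + 1) * X ^ (n + 1))), ?_⟩
    push_cast
    linear_combination ((v⁻¹ : (PowerSeries ℤ)ˣ) : PowerSeries ℤ) * ((m : PowerSeries ℤ)+1)^2 * ht
      - ((v⁻¹ : (PowerSeries ℤ)ˣ) : PowerSeries ℤ) * (1 + ((m : PowerSeries ℤ)+1) * X ^ (n+1)) * hs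
      + (1 + ((m : PowerSeries ℤ)+1) * X ^ (n+1)) * hvv

/-- If two integer sequences give the same q-adic infinite product
`∏_{k≥1} (1-q^k)^(i k)`, they agree (for all k ≥ 1). -/
theorem exponents_unique (i j : ℕ → ℤ)
    (h : ∀ N : ℕ,
      trunc N ((∏ k ∈ range N, oneSubX k ^ i (k + 1) : (PowerSeries ℤ)ˣ) : PowerSeries ℤ) =
      trunc N ((∏ k ∈ range N, oneSubX k ^ j (k + 1) : (PowerSeries ℤ)ˣ) : PowerSeries ℤ)) :
    ∀ k ≥ 1, i k = j k := by
  suffices hstep : ∀ n : ℕ, (∀ m < n, i (m + 1) = j (m + 1)) → i (n + 1) = j (n + 1) by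
    have hall : ∀ n, i (n + 1) = j (n + 1) := by
      intro n
      induction n using Nat.strong_induction_on with
      | _ n IH => exact hstep n IH
    intro k hk
    obtain ⟨n, rfl⟩ : ∃ n, k = n + 1 := ⟨k - 1, by omega⟩
    exact hall n
  intro n IH
  have H := trunc_eq_iff.mp (h (n + 2))
  rw [prod_range_succ, prod_range_succ, prod_range_succ, prod_range_succ] at H
  have hP : (∏ k ∈ range n, oneSubX k ^ i (k + 1)) =
      (∏ k ∈ range n, oneSubX k ^ j (k + 1)) :=
    Finset.prod_congr rfl (fun k hk => by rw [IH k (mem_range.mp hk)])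
  rw [hP] at H
  set P : (PowerSeries ℤ)ˣ := ∏ k ∈ range n, oneSubX k ^ j (k + 1) with hPdef
  set u1 := oneSubX n ^ i (n + 1)
  set u2 := oneSubX (n + 1) ^ i (n + 2)
  set v1 := oneSubX n ^ j (n + 1)
  set v2 := oneSubX (n + 1) ^ j (n + 2)
  simp only [Units.val_mul] at H
  have hbase : (X : PowerSeries ℤ) ^ (n + 2) ∣ ((oneSubX (n + 1) : (PowerSeries ℤ)ˣ) : PowerSeries ℤ) - 1 := by
    rw [oneSubX_val]
    simp [dvd_neg]
  obtain ⟨a, ha⟩ := H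
  obtain ⟨b, hb⟩ := zpow_oneSubX_dvd n (i (n + 1))
  obtain ⟨c, hc⟩ := zpow_oneSubX_dvd n (j (n + 1))
  obtain ⟨d, hd⟩ := zpow_one_dvd (n + 2) (oneSubX (n + 1)) hbase (i (n + 2))
  obtain ⟨e, he⟩ := zpow_one_dvd (n + 2) (oneSubX (n + 1)) hbase (j (n + 2))
  have key : (X : PowerSeries ℤ) ^ (n + 2) ∣
      (P : PowerSeries ℤ) * ((((j (n + 1) : ℤ) : PowerSeries ℤ) - ((i (n + 1) : ℤ) : PowerSeries ℤ)) * X ^ (n + 1)) := by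
    refine ⟨a - (P : PowerSeries ℤ) * ((u1 : PowerSeries ℤ) * d + b - (v1 : PowerSeries ℤ) * e - c), ?_⟩
    linear_combination ha - (P : PowerSeries ℤ) * (u1 : PowerSeries ℤ) * hd
      - (P : PowerSeries ℤ) * hb + (P : PowerSeries ℤ) * (v1 : PowerSeries ℤ) * he
      + (P : PowerSeries ℤ) * hc
  rw [Units.dvd_mul_left] at key
  have hc0 := (PowerSeries.X_pow_dvd_iff.mp key) (n + 1) (by omega)
  rw [show (((j (n + 1) : ℤ) : PowerSeries ℤ) - ((i (n + 1) : ℤ) : PowerSeries ℤ)) =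
      C (j (n + 1) - i (n + 1)) by simp [map_sub]] at hc0
  rw [PowerSeries.coeff_C_mul, PowerSeries.coeff_X_pow, if_pos rfl, mul_one] at hc0
  omega
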